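/- Let h, u, q be positive integers with h ≡ 2 or 4 (mod 6), u ≡ 0 (mod 3), u ≥ 6, and 3 ∤ q. Suppose there exists a (u+1)-GDD of type q^(u+1), and suppose that for every d with d ≡ h (mod 3) and d_min ≤ d ≤ h(u−1)/2 there exists a 4-GDD of type h^u d^1, where d_min is the least positive integer congruent to h mod 3. Then for every m with m ≡ h·q (mod 3) and q·d_min ≤ m ≤ q·h·(u−1)/2, there exists a 4-GDD of type (h·q)^u m^1. -/

import Mathlib

/-- A `K`-group divisible design on point set `V`: `Gs` is the multiset of groups
(forming a partition of `V`), `Bs` the set of blocks, `K` the set of allowed block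
sizes.  Every pair of points from distinct groups lies in exactly one block and no
pair of points from the same group lies in any block. -/
structure IsGDD (V : Type) (Gs : Multiset (Finset V)) (Bs : Finset (Finset V))
    (K : Set ℕ) : Prop where
  partition : ∀ v : V, ∃ G s, Gs = G ::ₘ s ∧ v ∈ G ∧ ∀ G' ∈ s, v ∉ G'
  sizes : ∀ b ∈ Bs, b.card ∈ K
  cross : ∀ x y : V, x ≠ y → (∀ G ∈ Gs, ¬(x ∈ G ∧ y ∈ G)) →
      ∃! b, b ∈ Bs ∧ x ∈ b ∧ y ∈ b
  within : ∀ G ∈ Gs, ∀ x ∈ G, ∀ y ∈ G, x ≠ y → ∀ b ∈ Bs, ¬(x ∈ b ∧ y ∈ b)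

/-- Existence of a `K`-GDD whose multiset of group sizes is `gtype`. -/
def GDDExists (K : Set ℕ) (gtype : Multiset ℕ) : Prop :=
  ∃ (V : Type) (_ : Fintype V) (Gs : Multiset (Finset V)) (Bs : Finset (Finset V)),
    IsGDD V Gs Bs K ∧ Gs.map Finset.card = gtype


section Helpers

variable {α β : Type}

/-- In a partition (in the `::ₘ` sense), the group containing a point is unique as a finset. -/
lemma partition_group_unique {P : Multiset (Finset α)}
    (hpart : ∀ v : α, ∃ G s, P = G ::ₘ s ∧ v ∈ G ∧ ∀ G' ∈ s, v ∉ G')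
    {v : α} {G1 G2 : Finset α} (h1 : G1 ∈ P) (h2 : G2 ∈ P)
    (hv1 : v ∈ G1) (hv2 : v ∈ G2) : G1 = G2 := by
  obtain ⟨G, s, hP, _, hno⟩ := hpart v
  have e1 : G1 = G := by
    rcases Multiset.mem_cons.mp (hP ▸ h1) with h | h
    · exact h
    · exact absurd hv1 (hno _ h)
  have e2 : G2 = G := by
    rcases Multiset.mem_cons.mp (hP ▸ h2) with h | h
    · exact h
    · exact absurd hv2 (hno _ h)
  rw [e1, e2]

/-- If the partition is presented via a list, every point lies in a unique position. -/
lemma partition_index {P : Multiset (Finset α)}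
    (hpart : ∀ v : α, ∃ G s, P = G ::ₘ s ∧ v ∈ G ∧ ∀ G' ∈ s, v ∉ G')
    {lP : List (Finset α)} (hl : P = ↑lP) :
    ∃ idx : α → Fin lP.length,
      (∀ v, v ∈ lP.get (idx v)) ∧ ∀ v (i : Fin lP.length), v ∈ lP.get i → i = idx v := by
  classical
  have hex : ∀ v : α, ∃ i : Fin lP.length, v ∈ lP.get i := by
    intro v
    obtain ⟨G, s, hP, hv, -⟩ := hpart v
    have hGmem : G ∈ lP := by
      have : G ∈ P := hP ▸ Multiset.mem_cons_self _ _
      rwa [hl, Multiset.mem_coe] at this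
    obtain ⟨i, hi⟩ := List.mem_iff_get.mp hGmem
    exact ⟨i, hi ▸ hv⟩
  choose idx hidx using hex
  refine ⟨idx, hidx, ?_⟩
  intro v i hi
  by_contra hne
  have hGeq : lP.get i = lP.get (idx v) := by
    apply partition_group_unique hpart ?_ ?_ hi (hidx v) <;>
      · rw [hl, Multiset.mem_coe]; exact List.get_mem _ _
  have hdup : List.Duplicate (lP.get i) lP := by
    rcases Ne.lt_or_gt hne with hlt | hlt
    · exact List.duplicate_iff_exists_distinct_get.mpr ⟨i, idx v, hlt, rfl, hGeq⟩
    · exact List.duplicate_iff_exists_distinct_get.mpr ⟨idx v, i, hlt, hGeq, rfl⟩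
  have hcount : 2 ≤ P.count (lP.get i) := by
    rw [hl, Multiset.coe_count]
    exact List.duplicate_iff_two_le_count.mp hdup
  obtain ⟨G, s, hP, hv, hno⟩ := hpart v
  have hmem_s : lP.get i ∈ s := by
    rw [hP, Multiset.count_cons] at hcount
    apply Multiset.count_pos.mp
    split at hcount <;> omega
  exact hno _ hmem_s hi

/-- Point `x` and `y` share a group iff their indices agree. -/
lemma partition_same_index {P : Multiset (Finset α)}
    (hpart : ∀ v : α, ∃ G s, P = G ::ₘ s ∧ v ∈ G ∧ ∀ G' ∈ s, v ∉ G')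
    {lP : List (Finset α)} (hl : P = ↑lP)
    {idx : α → Fin lP.length}
    (hidx1 : ∀ v, v ∈ lP.get (idx v))
    (hidx2 : ∀ v (i : Fin lP.length), v ∈ lP.get i → i = idx v)
    (x y : α) : (∃ G ∈ P, x ∈ G ∧ y ∈ G) ↔ idx x = idx y := by
  constructor
  · rintro ⟨G, hG, hx, hy⟩
    have h1 : G = lP.get (idx x) := by
      apply partition_group_unique hpart hG ?_ hx (hidx1 x)
      rw [hl, Multiset.mem_coe]; exact List.get_mem _ _
    exact hidx2 y (idx x) (h1 ▸ hy)
  · intro hxy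
    refine ⟨lP.get (idx x), ?_, hidx1 x, ?_⟩
    · rw [hl, Multiset.mem_coe]; exact List.get_mem _ _
    · rw [hxy]; exact hidx1 y

lemma rel_exists_forall₂ {r : α → β → Prop} :
    ∀ (l : List α) (T : Multiset β), Multiset.Rel r (↑l) T →
      ∃ lb : List β, T = ↑lb ∧ List.Forall₂ r l lb := by
  intro l
  induction l with
  | nil =>
      intro T hT
      have hT' : Multiset.Rel r 0 T := by simpa using hT
      have hT0 : T = 0 := Multiset.rel_zero_left.mp hT'
      exact ⟨[], by simp [hT0], List.Forall₂.nil⟩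
  | cons a l ih =>
      intro T hT
      rw [← Multiset.cons_coe, Multiset.rel_cons_left] at hT
      obtain ⟨b, T', hab, hrel, rfl⟩ := hT
      obtain ⟨lb, rfl, hF⟩ := ih T' hrel
      exact ⟨b :: lb, by rw [Multiset.cons_coe], List.Forall₂.cons hab hF⟩

/-- Splitting a natural number `t ≤ S.card * T` as a sum over `S` of summands `≤ T`. -/
lemma exists_fn_sum [DecidableEq α] (S : Finset α) (T : ℕ) :
    ∀ t : ℕ, t ≤ S.card * T →
    ∃ a : α → ℕ, (∀ v, a v ≤ T) ∧ ∑ v ∈ S, a v = t := by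
  induction S using Finset.induction_on with
  | empty =>
      intro t ht
      simp only [Finset.card_empty, Nat.zero_mul, Nat.le_zero] at ht
      exact ⟨fun _ => 0, fun _ => Nat.zero_le _, by simp [ht]⟩
  | @insert x S hx ih =>
      intro t ht
      have hcard : (insert x S).card = S.card + 1 := Finset.card_insert_of_notMem hx
      rw [hcard, Nat.succ_mul] at ht
      rcases le_or_gt t T with h1 | h1
      · obtain ⟨a, haT, hsum⟩ := ih 0 (Nat.zero_le _)
        refine ⟨fun v => if v = x then t else a v, ?_, ?_⟩
        · intro v; dsimp only; split
          · exact h1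
          · exact haT v
        · rw [Finset.sum_insert hx, if_pos rfl,
            Finset.sum_congr rfl (fun v hv => if_neg (fun h => hx (by rw [← h]; exact hv))), hsum]
          omega
      · obtain ⟨a, haT, hsum⟩ := ih (t - T) (by omega)
        refine ⟨fun v => if v = x then T else a v, ?_, ?_⟩
        · intro v; dsimp only; split
          · exact le_rfl
          · exact haT v
        · rw [Finset.sum_insert hx, if_pos rfl,
            Finset.sum_congr rfl (fun v hv => if_neg (fun h => hx (by rw [← h]; exact hv))), hsum]
          omega

end Helpers

/-- A GDD structure can be transported across any partition with the same multiset of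
group sizes. -/
lemma gdd_transport {W V' : Type} {K : Set ℕ}
    {GsW : Multiset (Finset W)} {BsW : Finset (Finset W)}
    (hW : IsGDD W GsW BsW K)
    (P : Multiset (Finset V'))
    (hpart : ∀ v : V', ∃ G s, P = G ::ₘ s ∧ v ∈ G ∧ ∀ G' ∈ s, v ∉ G')
    (hcard : P.map Finset.card = GsW.map Finset.card) :
    ∃ Bs' : Finset (Finset V'), IsGDD V' P Bs' K := by
  classical
  have hrel : Multiset.Rel (fun A B => A.card = B.card) P GsW := by
    rw [← Multiset.rel_eq] at hcard
    rwa [Multiset.rel_map] at hcard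
  obtain ⟨lP, hlP⟩ : ∃ l : List (Finset V'), P = ↑l := ⟨P.toList, (Multiset.coe_toList P).symm⟩
  obtain ⟨lW, hlW, hF⟩ := rel_exists_forall₂ lP GsW (hlP ▸ hrel)
  obtain ⟨idxP, hidxP1, hidxP2⟩ := partition_index hpart hlP
  obtain ⟨idxW, hidxW1, hidxW2⟩ := partition_index hW.partition hlW
  have hlen : lP.length = lW.length := hF.length_eq
  have hcards : ∀ i : Fin lP.length, (lP.get i).card = (lW.get (Fin.cast hlen i)).card := by
    intro i
    exact (List.forall₂_iff_get.mp hF).2 i.val i.isLt (hlen ▸ i.isLt)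
  let e : ∀ i : Fin lP.length, {x // x ∈ lP.get i} ≃ {y // y ∈ lW.get (Fin.cast hlen i)} :=
    fun i => Finset.equivOfCardEq (hcards i)
  let E : V' → W := fun v => (e (idxP v) ⟨v, hidxP1 v⟩).val
  have hkey : ∀ (v : V') (i : Fin lP.length) (hv : v ∈ lP.get i),
      E v = (e i ⟨v, hv⟩).val := by
    intro v i hv
    obtain rfl := hidxP2 v i hv
    rfl
  have hEmem : ∀ v, E v ∈ lW.get (Fin.cast hlen (idxP v)) := fun v => (e (idxP v) ⟨v, _⟩).2
  have hEidx : ∀ v, idxW (E v) = Fin.cast hlen (idxP v) := fun v => (hidxW2 _ _ (hEmem v)).symm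
  have hinj : Function.Injective E := by
    intro v v' hEv
    have hidq : idxP v = idxP v' := by
      have h1 := hEidx v
      have h2 := hEidx v'
      rw [hEv, h2] at h1
      exact Fin.ext (congrArg Fin.val h1).symm
    have hv' : v' ∈ lP.get (idxP v) := by rw [hidq]; exact hidxP1 v'
    have h2 : E v' = (e (idxP v) ⟨v', hv'⟩).val := hkey v' (idxP v) hv'
    have hsub : (e (idxP v) ⟨v, hidxP1 v⟩) = (e (idxP v) ⟨v', hv'⟩) :=
      Subtype.ext (by rw [← h2]; exact hEv)
    have := (e (idxP v)).injective hsub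
    exact congrArg Subtype.val this
  have hsurj : Function.Surjective E := by
    intro w
    set j := idxW w with hj
    refine ⟨((e (Fin.cast hlen.symm j)).symm ⟨w, ?_⟩).val, ?_⟩
    · have hcc : Fin.cast hlen (Fin.cast hlen.symm j) = j := Fin.ext rfl
      rw [hcc]; exact hidxW1 w
    · set x := (e (Fin.cast hlen.symm j)).symm ⟨w, _⟩ with hx
      rw [hkey x.val (Fin.cast hlen.symm j) x.2]
      show ((e (Fin.cast hlen.symm j)) ⟨x.val, x.2⟩).val = w
      have : (⟨x.val, x.2⟩ : {a // a ∈ lP.get (Fin.cast hlen.symm j)}) = x := rfl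
      rw [this, hx, Equiv.apply_symm_apply]
  have hSGP : ∀ x y : V', (∃ G ∈ P, x ∈ G ∧ y ∈ G) ↔ idxP x = idxP y :=
    partition_same_index hpart hlP hidxP1 hidxP2
  have hSGW : ∀ x y : W, (∃ G ∈ GsW, x ∈ G ∧ y ∈ G) ↔ idxW x = idxW y :=
    partition_same_index hW.partition hlW hidxW1 hidxW2
  let Eq : V' ≃ W := Equiv.ofBijective E ⟨hinj, hsurj⟩
  have hmemB : ∀ (B : Finset W) (v : V'), v ∈ B.image Eq.symm ↔ E v ∈ B := by
    intro B v
    simp only [Finset.mem_image]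
    constructor
    · rintro ⟨w, hw, rfl⟩
      have hEq : E (Eq.symm w) = w := Eq.apply_symm_apply w
      rw [hEq]; exact hw
    · intro hv
      exact ⟨E v, hv, Eq.symm_apply_apply v⟩
  refine ⟨BsW.image (fun B => B.image Eq.symm), ⟨hpart, ?_, ?_, ?_⟩⟩
  · intro b hb
    obtain ⟨B, hB, rfl⟩ := Finset.mem_image.mp hb
    rw [Finset.card_image_of_injective _ Eq.symm.injective]
    exact hW.sizes B hB
  · intro x y hxy hno
    have hnoW : ∀ G ∈ GsW, ¬(E x ∈ G ∧ E y ∈ G) := by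
      rintro G hG ⟨hx, hy⟩
      have h1 : idxW (E x) = idxW (E y) := (hSGW _ _).mp ⟨G, hG, hx, hy⟩
      rw [hEidx, hEidx] at h1
      have h2 : idxP x = idxP y := by
        apply_fun Fin.val at h1
        simp only [Fin.coe_cast] at h1
        exact Fin.ext h1
      obtain ⟨G', hG', hx', hy'⟩ := (hSGP x y).mpr h2
      exact hno G' hG' ⟨hx', hy'⟩
    obtain ⟨B, ⟨hB, hxB, hyB⟩, hBu⟩ := hW.cross (E x) (E y) (fun hEq => hxy (hinj hEq)) hnoW
    refine ⟨B.image Eq.symm, ⟨Finset.mem_image_of_mem _ hB,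
      (hmemB B x).mpr hxB, (hmemB B y).mpr hyB⟩, ?_⟩
    rintro C ⟨hC, hxC, hyC⟩
    obtain ⟨B₂, hB₂, rfl⟩ := Finset.mem_image.mp hC
    rw [hBu B₂ ⟨hB₂, (hmemB B₂ x).mp hxC, (hmemB B₂ y).mp hyC⟩]
  · intro G hG x hx y hy hxy b hb hcon
    obtain ⟨hxb, hyb⟩ := hcon
    obtain ⟨B₂, hB₂, rfl⟩ := Finset.mem_image.mp hb
    have h1 : idxP x = idxP y := (hSGP x y).mp ⟨G, hG, hx, hy⟩
    obtain ⟨GW, hGW, hxW, hyW⟩ : ∃ GW ∈ GsW, E x ∈ GW ∧ E y ∈ GW := by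
      apply (hSGW _ _).mpr
      rw [hEidx, hEidx, h1]
    exact hW.within GW hGW (E x) hxW (E y) hyW (fun hEq => hxy (hinj hEq)) B₂ hB₂
      ⟨(hmemB B₂ x).mp hxb, (hmemB B₂ y).mp hyb⟩

/-- Let h ≡ 2 or 4 (mod 6), u ≡ 0 (mod 3) with u ≥ 6, and 3 ∤ q.  Suppose there
is a (u+1)-GDD of type q^(u+1) and, with d_min the least positive integer
congruent to h mod 3, a 4-GDD of type h^u d^1 for every admissible d (i.e.
d ≡ h (mod 3) and d_min ≤ d ≤ h(u−1)/2).  Then for every m ≡ h·q (mod 3) with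
q·d_min ≤ m ≤ q·h·(u−1)/2 there is a 4-GDD of type (h·q)^u m^1. -/
theorem stmt_9 (h u q dmin : ℕ)
    (hh6 : h % 6 = 2 ∨ h % 6 = 4) (hu3 : u % 3 = 0) (hu : 6 ≤ u)
    (hq : 1 ≤ q) (hq3 : ¬ (3 ∣ q))
    (hdmin : 1 ≤ dmin ∧ dmin % 3 = h % 3 ∧
      ∀ d : ℕ, 1 ≤ d → d % 3 = h % 3 → dmin ≤ d)
    (hmaster : GDDExists {u + 1} (Multiset.replicate (u + 1) q))
    (hfill : ∀ d : ℕ, d % 3 = h % 3 → dmin ≤ d → 2 * d ≤ h * (u - 1) →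
      GDDExists {4} (Multiset.replicate u h + {d}))
    (m : ℕ) (hm3 : m % 3 = (h * q) % 3) (hml : q * dmin ≤ m)
    (hmu : 2 * m ≤ q * h * (u - 1)) :
    GDDExists {4} (Multiset.replicate u (h * q) + {m}) := by
  classical
  obtain ⟨hd1, hd3, hdle⟩ := hdmin
  have hh2 : 2 ≤ h := by omega
  have hdh : dmin ≤ h := hdle h (by omega) rfl
  have hu13 : (u - 1) % 3 = 2 := by omega
  have hX2 : (h * (u - 1)) % 2 = 0 := by
    have h2 : h % 2 = 0 := by omega
    rw [Nat.mul_mod, h2]; simp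
  have hX3 : (h * (u - 1)) % 3 = (h % 3) * 2 % 3 := by
    rw [Nat.mul_mod, hu13]
  have hdX : 2 * dmin ≤ h * (u - 1) :=
    le_trans (by omega : 2 * dmin ≤ h * 2) (Nat.mul_le_mul (le_refl h) (by omega))
  set X := h * (u - 1) with hXdef
  have h6dvd : 6 ∣ (X - 2 * dmin) := by omega
  obtain ⟨T, h6T⟩ : ∃ T, 6 * T = X - 2 * dmin := ⟨(X - 2 * dmin) / 6, Nat.mul_div_cancel' h6dvd⟩
  have hmu' : 2 * m ≤ q * X := by rw [hXdef, ← Nat.mul_assoc]; exact hmu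
  obtain ⟨tt, h3t, httT, hmval⟩ :
      ∃ tt, 3 * tt = m - q * dmin ∧ tt ≤ q * T ∧ q * dmin + 3 * tt = m := by
    have e1 : (h * q) % 3 = (h % 3) * (q % 3) % 3 := Nat.mul_mod h q 3
    have e2 : (q * dmin) % 3 = (h % 3) * (q % 3) % 3 := by
      rw [Nat.mul_mod, hd3, Nat.mul_comm]
    have hmod : m % 3 = (q * dmin) % 3 := by rw [hm3, e1, e2]
    have hqX : q * X = 6 * (q * T) + 2 * (q * dmin) := by
      have hXval : X = 6 * T + 2 * dmin := by omega
      rw [hXval]; ring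
    refine ⟨(m - q * dmin) / 3, ?_⟩
    generalize q * dmin = B at hmod hml hqX ⊢
    generalize q * T = QT at hqX ⊢
    generalize q * X = QX at hqX hmu'
    omega
  -- the master GDD
  obtain ⟨V, fV, Gs, Bs, hGDD, hGtype⟩ := hmaster
  have hGscard : Multiset.card Gs = u + 1 := by
    have := congrArg Multiset.card hGtype
    simpa using this
  have hGcard : ∀ G ∈ Gs, G.card = q := by
    intro G hG
    have : G.card ∈ Gs.map Finset.card := Multiset.mem_map_of_mem _ hG
    rw [hGtype] at this
    exact Multiset.eq_of_mem_replicate this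
  have hGsne : Gs ≠ 0 := by
    intro h0; rw [h0] at hGscard; simp at hGscard
  obtain ⟨G₀, hG₀⟩ := Multiset.exists_mem_of_ne_zero hGsne
  obtain ⟨rest, hrest⟩ := Multiset.exists_cons_of_mem hG₀
  have hG₀card : G₀.card = q := hGcard G₀ hG₀
  have hrestcard : Multiset.card rest = u := by
    rw [hrest] at hGscard; simp at hGscard; omega
  have hGuniq : ∀ (v : V) (G1 G2 : Finset V), G1 ∈ Gs → G2 ∈ Gs → v ∈ G1 → v ∈ G2 → G1 = G2 :=
    fun _ _ _ h1 h2 hv1 hv2 => partition_group_unique hGDD.partition h1 h2 hv1 hv2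
  have hG₀ne : G₀.Nonempty := by rw [← Finset.card_pos, hG₀card]; omega
  have hG₀rest : G₀ ∉ rest := by
    intro hmem
    obtain ⟨v, hv⟩ := hG₀ne
    obtain ⟨G, s, hPs, hvG, hno⟩ := hGDD.partition v
    have hcount : 2 ≤ Gs.count G₀ := by
      rw [hrest, Multiset.count_cons_self]
      have := Multiset.one_le_count_iff_mem.mpr hmem
      omega
    have hmem_s : G₀ ∈ s := by
      rw [hPs, Multiset.count_cons] at hcount
      apply Multiset.count_pos.mp
      split at hcount <;> omega
    exact hno _ hmem_s hv
  have hrest_disj : ∀ G ∈ rest, ∀ v ∈ G, v ∉ G₀ := by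
    intro G hGr v hvG hv0
    have hGmem : G ∈ Gs := by rw [hrest]; exact Multiset.mem_cons_of_mem hGr
    have hGG : G = G₀ := hGuniq v G G₀ hGmem hG₀ hvG hv0
    rw [hGG] at hGr
    exact hG₀rest hGr
  -- weights
  obtain ⟨a, haT, hasum⟩ := exists_fn_sum G₀ T tt (by rw [hG₀card]; exact httT)
  set w : V → ℕ := fun v => if v ∈ G₀ then dmin + 3 * a v else h with hwdef
  have hw1 : ∀ v, 1 ≤ w v := by intro v; simp only [hwdef]; split <;> omega
  set M := h + dmin + 3 * T + 1 with hMdef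
  have hwM : ∀ v, w v < M := by
    intro v; simp only [hwdef, hMdef]; split
    · have := haT v; omega
    · omega
  let V' := {p : V × Fin M // (p.2 : ℕ) < w p.1}
  let fiber : Finset V → Finset V' := fun G => Finset.univ.filter (fun x => x.1.1 ∈ G)
  have hfib_mem : ∀ (G : Finset V) (x : V'), x ∈ fiber G ↔ x.1.1 ∈ G := by
    intro G x; simp [fiber]
  have hfib_card : ∀ G : Finset V, (fiber G).card = ∑ v ∈ G, w v := by
    intro G
    have hdisj : ∀ x ∈ G, ∀ y ∈ G, x ≠ y →
        Disjoint ((Finset.range (w x)).image (fun k => (x, k)))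
                 ((Finset.range (w y)).image (fun k => (y, k))) := by
      intro x _ y _ hxy
      rw [Finset.disjoint_left]
      rintro p hp hp'
      simp only [Finset.mem_image, Finset.mem_range] at hp hp'
      obtain ⟨k, _, rfl⟩ := hp
      obtain ⟨k', _, hpe⟩ := hp'
      exact hxy (congrArg Prod.fst hpe).symm
    have hmemt : ∀ p : V × ℕ,
        p ∈ G.biUnion (fun v => (Finset.range (w v)).image (fun k => (v, k))) ↔
          p.1 ∈ G ∧ p.2 < w p.1 := by
      intro p
      simp only [Finset.mem_biUnion, Finset.mem_image, Finset.mem_range]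
      constructor
      · rintro ⟨v, hv, k, hk, rfl⟩; exact ⟨hv, hk⟩
      · rintro ⟨h1, h2⟩; exact ⟨p.1, h1, p.2, h2, rfl⟩
    have hsum : ∑ v ∈ G, w v
        = (G.biUnion fun v => (Finset.range (w v)).image (fun k => (v, k))).card := by
      rw [Finset.card_biUnion hdisj]
      apply Finset.sum_congr rfl
      intro v _
      rw [Finset.card_image_of_injective _ (fun k k' hk => (Prod.ext_iff.mp hk).2),
        Finset.card_range]
    rw [hsum]
    refine Finset.card_bij' (fun (x : V') (_ : x ∈ fiber G) => (x.1.1, (x.1.2 : ℕ)))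
      (fun p hp => ⟨(p.1, ⟨p.2, lt_trans ((hmemt p).mp hp).2 (hwM p.1)⟩),
        ((hmemt p).mp hp).2⟩) ?_ ?_ ?_ ?_
    · intro x hx
      exact (hmemt _).mpr ⟨(hfib_mem G x).mp hx, x.2⟩
    · intro p hp
      exact (hfib_mem G _).mpr ((hmemt p).mp hp).1
    · intro x hx; rfl
    · intro p hp; rfl
  -- group sizes
  have hfibG₀ : (fiber G₀).card = m := by
    rw [hfib_card]
    have hcongr : ∀ v ∈ G₀, w v = dmin + 3 * a v := by
      intro v hv; simp [hwdef, hv]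
    rw [Finset.sum_congr rfl hcongr, Finset.sum_add_distrib, Finset.sum_const, hG₀card,
      ← Finset.mul_sum, hasum, smul_eq_mul]
    omega
  have hfibrest : ∀ G ∈ rest, (fiber G).card = h * q := by
    intro G hGr
    rw [hfib_card]
    have hGq : G.card = q := hGcard G (by rw [hrest]; exact Multiset.mem_cons_of_mem hGr)
    have hcongr : ∀ v ∈ G, w v = h := by
      intro v hv
      simp [hwdef, hrest_disj G hGr v hv]
    rw [Finset.sum_congr rfl hcongr, Finset.sum_const, hGq, smul_eq_mul, Nat.mul_comm]
  have hGs'type : (Gs.map fiber).map Finset.card = Multiset.replicate u (h * q) + {m} := by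
    rw [hrest, Multiset.map_cons, Multiset.map_cons, hfibG₀]
    have hrepl : (rest.map fiber).map Finset.card = Multiset.replicate u (h * q) := by
      rw [Multiset.map_map]
      apply Multiset.eq_replicate.mpr
      refine ⟨by simpa using hrestcard, ?_⟩
      intro x hx
      obtain ⟨G, hGr, rfl⟩ := Multiset.mem_map.mp hx
      exact hfibrest G hGr
    rw [hrepl, add_comm, Multiset.singleton_add]
  have hGs'part : ∀ x : V', ∃ Gf s', Gs.map fiber = Gf ::ₘ s' ∧ x ∈ Gf ∧ ∀ G' ∈ s', x ∉ G' := by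
    intro x
    obtain ⟨G, s, hPs, hv, hno⟩ := hGDD.partition x.1.1
    refine ⟨fiber G, s.map fiber, by rw [hPs, Multiset.map_cons], (hfib_mem _ _).mpr hv, ?_⟩
    intro G' hG'
    obtain ⟨G₂, hG₂, rfl⟩ := Multiset.mem_map.mp hG'
    rw [hfib_mem]
    exact hno G₂ hG₂
  -- blocks of the master are transversals
  have hgrpex : ∀ v : V, ∃ G, G ∈ Gs ∧ v ∈ G := by
    intro v
    obtain ⟨G, s, hPs, hv, -⟩ := hGDD.partition v
    exact ⟨G, by rw [hPs]; exact Multiset.mem_cons_self _ _, hv⟩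
  choose grp hgrpGs hgrpself using hgrpex
  have hK : ∀ b ∈ Bs, b.card = u + 1 := by
    intro b hb
    have := hGDD.sizes b hb
    simpa using this
  have htrans : ∀ b ∈ Bs, ∃ v₀ ∈ b, v₀ ∈ G₀ ∧ ∀ v ∈ b, v ≠ v₀ → v ∉ G₀ := by
    intro b hb
    have hinjg : ∀ v ∈ b, ∀ v' ∈ b, grp v = grp v' → v = v' := by
      intro v hv v' hv' hg
      by_contra hne
      exact hGDD.within (grp v) (hgrpGs v) v (hgrpself v) v' (by rw [hg]; exact hgrpself v')
        hne b hb ⟨hv, hv'⟩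
    have hsub : b.image grp ⊆ Gs.toFinset := by
      intro G hG
      obtain ⟨v, hv, rfl⟩ := Finset.mem_image.mp hG
      exact Multiset.mem_toFinset.mpr (hgrpGs v)
    have hcardim : (b.image grp).card = u + 1 := by
      rw [Finset.card_image_of_injOn (fun v hv v' hv' hg => hinjg v hv v' hv' hg)]
      exact hK b hb
    have heq : b.image grp = Gs.toFinset := by
      apply Finset.eq_of_subset_of_card_le hsub
      rw [hcardim]
      calc Gs.toFinset.card ≤ Multiset.card Gs := Multiset.toFinset_card_le Gs
        _ = u + 1 := hGscard
    have hG₀img : G₀ ∈ b.image grp := by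
      rw [heq]; exact Multiset.mem_toFinset.mpr hG₀
    obtain ⟨v₀, hv₀b, hgv₀⟩ := Finset.mem_image.mp hG₀img
    refine ⟨v₀, hv₀b, by rw [← hgv₀]; exact hgrpself v₀, ?_⟩
    intro v hv hne hvG₀
    exact hGDD.within G₀ hG₀ v hvG₀ v₀ (by rw [← hgv₀]; exact hgrpself v₀) hne b hb ⟨hv, hv₀b⟩
  have hbw : ∀ b ∈ Bs, ∃ v₀, v₀ ∈ b ∧ v₀ ∈ G₀ ∧
      b.val.map w = Multiset.replicate u h + {w v₀} := by
    intro b hb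
    obtain ⟨v₀, hv₀b, hv₀G₀, hrest'⟩ := htrans b hb
    refine ⟨v₀, hv₀b, hv₀G₀, ?_⟩
    have hv₀val : v₀ ∈ b.val := Finset.mem_def.mp hv₀b
    rw [← Multiset.cons_erase hv₀val, Multiset.map_cons]
    have hrepl : (b.val.erase v₀).map w = Multiset.replicate u h := by
      apply Multiset.eq_replicate.mpr
      constructor
      · rw [Multiset.card_map, Multiset.card_erase_of_mem hv₀val]
        have hbcard : Multiset.card b.val = u + 1 := hK b hb
        rw [hbcard]
        rfl
      · intro x hx
        obtain ⟨v, hvmem, rfl⟩ := Multiset.mem_map.mp hx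
        have hvne : v ≠ v₀ := ((Multiset.Nodup.mem_erase_iff b.nodup).mp hvmem).1
        have hvb : v ∈ b := Multiset.mem_of_mem_erase hvmem
        simp [hwdef, hrest' v hvb hvne]
    rw [hrepl, add_comm, Multiset.singleton_add]
  -- admissibility of the weights on G₀
  have hadm : ∀ v₀ ∈ G₀, (w v₀) % 3 = h % 3 ∧ dmin ≤ w v₀ ∧ 2 * w v₀ ≤ X := by
    intro v₀ hv₀
    have hwv : w v₀ = dmin + 3 * a v₀ := by simp [hwdef, hv₀]
    have haTv := haT v₀
    refine ⟨?_, ?_, ?_⟩ <;> rw [hwv] <;> omega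
  -- per-block types and point-fibers
  let S : Finset V → Type := fun b => {x : V' // x.1.1 ∈ b}
  let pfib : ∀ b : Finset V, V → Finset (S b) :=
    fun b v => Finset.univ.filter (fun x => x.1.1.1 = v)
  have hpfib_mem : ∀ (b : Finset V) (v : V) (x : S b), x ∈ pfib b v ↔ x.1.1.1 = v := by
    intro b v x; simp [pfib]
  have hpfib_card : ∀ (b : Finset V), ∀ v ∈ b, (pfib b v).card = w v := by
    intro b v hvb
    rw [← Finset.card_range (w v)]
    refine Finset.card_bij' (fun (x : S b) (_ : x ∈ pfib b v) => (x.1.1.2 : ℕ))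
      (fun k hk => ⟨⟨(v, ⟨k, lt_trans (Finset.mem_range.mp hk) (hwM v)⟩),
        Finset.mem_range.mp hk⟩, hvb⟩) ?_ ?_ ?_ ?_
    · intro x hx
      apply Finset.mem_range.mpr
      have hxv : x.1.1.1 = v := (hpfib_mem b v x).mp hx
      have hlt := x.1.2
      rw [hxv] at hlt
      exact hlt
    · intro k hk
      exact (hpfib_mem b v _).mpr rfl
    · intro x hx
      have hxv : x.1.1.1 = v := (hpfib_mem b v x).mp hx
      apply Subtype.ext
      apply Subtype.ext
      subst hxv
      rfl
    · intro k hk; rfl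
  have hPb_part : ∀ (b : Finset V) (x : S b),
      ∃ G s, b.val.map (pfib b) = G ::ₘ s ∧ x ∈ G ∧ ∀ G' ∈ s, x ∉ G' := by
    intro b x
    have hvb : x.1.1.1 ∈ b.val := Finset.mem_def.mp x.2
    refine ⟨pfib b x.1.1.1, (b.val.erase x.1.1.1).map (pfib b), ?_,
      (hpfib_mem _ _ _).mpr rfl, ?_⟩
    · rw [← Multiset.map_cons, Multiset.cons_erase hvb]
    · intro G' hG'
      obtain ⟨v', hv', rfl⟩ := Multiset.mem_map.mp hG'
      have hne : v' ≠ x.1.1.1 := ((Multiset.Nodup.mem_erase_iff b.nodup).mp hv').1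
      rw [hpfib_mem]
      exact fun hh => hne hh.symm
  have hPb_card : ∀ b ∈ Bs, ∃ d, d % 3 = h % 3 ∧ dmin ≤ d ∧ 2 * d ≤ X ∧
      (b.val.map (pfib b)).map Finset.card = Multiset.replicate u h + {d} := by
    intro b hb
    obtain ⟨v₀, hv₀b, hv₀G₀, hbw'⟩ := hbw b hb
    obtain ⟨ha1, ha2, ha3⟩ := hadm v₀ hv₀G₀
    refine ⟨w v₀, ha1, ha2, ha3, ?_⟩
    rw [Multiset.map_map]
    have hcc : b.val.map (Finset.card ∘ pfib b) = b.val.map w := by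
      apply Multiset.map_congr rfl
      intro v hv
      exact hpfib_card b v (Finset.mem_def.mpr hv)
    rw [hcc, hbw']
  have hblocks : ∀ b : {b // b ∈ Bs}, ∃ Bsb : Finset (Finset (S b.val)),
      IsGDD (S b.val) (b.val.val.map (pfib b.val)) Bsb {4} := by
    rintro ⟨b, hb⟩
    obtain ⟨d, hd1', hd2', hd3', hcard'⟩ := hPb_card b hb
    obtain ⟨Wb, _, GsW, BsW, hWgdd, hWtype⟩ := hfill d hd1' hd2' hd3'
    exact gdd_transport hWgdd _ (hPb_part b) (by rw [hcard', hWtype])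
  choose Bsb hBsb using hblocks
  let Bs' : Finset (Finset V') :=
    Bs.attach.biUnion (fun b => (Bsb b).image (fun B => B.image (fun x => x.val)))
  have hmemBs' : ∀ C : Finset V',
      C ∈ Bs' ↔ ∃ b : {b // b ∈ Bs}, ∃ B ∈ Bsb b, C = B.image (fun x => x.val) := by
    intro C
    simp only [Bs', Finset.mem_biUnion, Finset.mem_attach, true_and, Finset.mem_image]
    constructor
    · rintro ⟨b, B, hB, rfl⟩; exact ⟨b, B, hB, rfl⟩
    · rintro ⟨b, B, hB, rfl⟩; exact ⟨b, B, hB, rfl⟩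
  have hmemIm : ∀ (b : Finset V) (B : Finset (S b)) (x : V'),
      x ∈ B.image (fun y => y.val) ↔ ∃ hx : x.1.1 ∈ b, (⟨x, hx⟩ : S b) ∈ B := by
    intro b B x
    simp only [Finset.mem_image]
    constructor
    · rintro ⟨y, hy, rfl⟩
      exact ⟨y.2, hy⟩
    · rintro ⟨hx, hB⟩
      exact ⟨⟨x, hx⟩, hB, rfl⟩
  refine ⟨V', inferInstance, Gs.map fiber, Bs', ⟨hGs'part, ?_, ?_, ?_⟩, hGs'type⟩
  · -- sizes
    intro C hC
    obtain ⟨b, B, hB, rfl⟩ := (hmemBs' C).mp hC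
    rw [Finset.card_image_of_injective _ Subtype.val_injective]
    exact (hBsb b).sizes B hB
  · -- cross
    intro x y hxy hno
    have hvne : x.1.1 ≠ y.1.1 := by
      intro hvv
      apply hno (fiber (grp x.1.1)) (Multiset.mem_map_of_mem _ (hgrpGs x.1.1))
      exact ⟨(hfib_mem _ _).mpr (hgrpself x.1.1),
        (hfib_mem _ _).mpr (by rw [← hvv]; exact hgrpself x.1.1)⟩
    have hnoG : ∀ G ∈ Gs, ¬(x.1.1 ∈ G ∧ y.1.1 ∈ G) := by
      rintro G hG ⟨h1, h2⟩
      exact hno (fiber G) (Multiset.mem_map_of_mem _ hG)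
        ⟨(hfib_mem _ _).mpr h1, (hfib_mem _ _).mpr h2⟩
    obtain ⟨b, ⟨hbBs, hxb, hyb⟩, hbu⟩ := hGDD.cross x.1.1 y.1.1 hvne hnoG
    have hx'y' : (⟨x, hxb⟩ : S b) ≠ ⟨y, hyb⟩ := fun hh => hxy (congrArg Subtype.val hh)
    have hnoPb : ∀ G ∈ b.val.map (pfib b), ¬((⟨x, hxb⟩ : S b) ∈ G ∧ (⟨y, hyb⟩ : S b) ∈ G) := by
      rintro G hG ⟨h1, h2⟩
      obtain ⟨v, hv, rfl⟩ := Multiset.mem_map.mp hG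
      have e1 : x.1.1 = v := (hpfib_mem b v _).mp h1
      have e2 : y.1.1 = v := (hpfib_mem b v _).mp h2
      exact hvne (e1.trans e2.symm)
    obtain ⟨B, ⟨hB, hxB, hyB⟩, hBu⟩ := (hBsb ⟨b, hbBs⟩).cross ⟨x, hxb⟩ ⟨y, hyb⟩ hx'y' hnoPb
    refine ⟨B.image (fun z => z.val), ⟨(hmemBs' _).mpr ⟨⟨b, hbBs⟩, B, hB, rfl⟩,
      (hmemIm b B x).mpr ⟨hxb, hxB⟩, (hmemIm b B y).mpr ⟨hyb, hyB⟩⟩, ?_⟩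
    rintro C ⟨hC, hxC, hyC⟩
    obtain ⟨b₂, B₂, hB₂, rfl⟩ := (hmemBs' C).mp hC
    obtain ⟨hxb₂, hxB₂⟩ := (hmemIm b₂.val B₂ x).mp hxC
    obtain ⟨hyb₂, hyB₂⟩ := (hmemIm b₂.val B₂ y).mp hyC
    have hb₂b : b₂ = ⟨b, hbBs⟩ := Subtype.ext (hbu b₂.val ⟨b₂.2, hxb₂, hyb₂⟩)
    subst hb₂b
    rw [hBu B₂ ⟨hB₂, hxB₂, hyB₂⟩]
  · -- within
    intro Gf hGf x hx y hy hxy C hC hcon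
    obtain ⟨hxC, hyC⟩ := hcon
    obtain ⟨G, hG, rfl⟩ := Multiset.mem_map.mp hGf
    have hvx : x.1.1 ∈ G := (hfib_mem G x).mp hx
    have hvy : y.1.1 ∈ G := (hfib_mem G y).mp hy
    obtain ⟨b₂, B₂, hB₂, rfl⟩ := (hmemBs' C).mp hC
    obtain ⟨hxb₂, hxB₂⟩ := (hmemIm b₂.val B₂ x).mp hxC
    obtain ⟨hyb₂, hyB₂⟩ := (hmemIm b₂.val B₂ y).mp hyC
    by_cases hvv : x.1.1 = y.1.1
    · have hx' : (⟨x, hxb₂⟩ : S b₂.val) ∈ pfib b₂.val x.1.1 := (hpfib_mem _ _ _).mpr rfl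
      have hy' : (⟨y, hyb₂⟩ : S b₂.val) ∈ pfib b₂.val x.1.1 := (hpfib_mem _ _ _).mpr hvv.symm
      have hne' : (⟨x, hxb₂⟩ : S b₂.val) ≠ ⟨y, hyb₂⟩ := fun hh => hxy (congrArg Subtype.val hh)
      exact (hBsb b₂).within (pfib b₂.val x.1.1)
        (Multiset.mem_map_of_mem _ (Finset.mem_def.mp hxb₂)) _ hx' _ hy' hne' B₂ hB₂
        ⟨hxB₂, hyB₂⟩
    · exact hGDD.within G hG x.1.1 hvx y.1.1 hvy hvv b₂.val b₂.2 ⟨hxb₂, hyb₂⟩
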